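/- Decomposition by counting function level sets avoids vees: let S* be a finite set of tiles and S a set of tiles such that C(s) := #{s* ∈ S* : s < s*} satisfies 1 ≤ C(s) ≤ 2^K for all s ∈ S. Define U(k) = {s ∈ S : 2^{k−1} ≤ C(s) < 2^k} for 1 ≤ k ≤ K. Then no U(k) contains a vee, and hence each U(k) decomposes uniquely into maximal trees. -/

import Mathlib

/-- A tile is a dyadic rectangle `I_s × ω_s`, encoded by the dyadic data of its
spatial interval `I_s = [2^{kI} nI, 2^{kI}(nI+1))` and its frequency interval
`ω_s = [2^{kω} nω, 2^{kω}(nω+1))`. -/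
structure Tile where
  kI : ℤ
  nI : ℤ
  kω : ℤ
  nω : ℤ

namespace Tile

/-- The spatial dyadic interval `I_s` of a tile. -/
def spat (s : Tile) : Set ℝ :=
  Set.Ico ((2:ℝ) ^ s.kI * s.nI) ((2:ℝ) ^ s.kI * (s.nI + 1))

/-- The frequency dyadic interval `ω_s` of a tile. -/
def freq (s : Tile) : Set ℝ :=
  Set.Ico ((2:ℝ) ^ s.kω * s.nω) ((2:ℝ) ^ s.kω * (s.nω + 1))

/-- The partial order on tiles: `s ≤ s'` iff `I_s ⊆ I_{s'}` and `ω_s ⊇ ω_{s'}`. -/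
def le (s s' : Tile) : Prop := s.spat ⊆ s'.spat ∧ s'.freq ⊆ s.freq

/-- Strict order on tiles. -/
def lt (s s' : Tile) : Prop := Tile.le s s' ∧ ¬ Tile.le s' s

end Tile

namespace TileAux

open Tile

lemma le_refl' (s : Tile) : Tile.le s s := ⟨subset_rfl, subset_rfl⟩

lemma le_trans' {a b c : Tile} (h : Tile.le a b) (h' : Tile.le b c) : Tile.le a c :=
  ⟨h.1.trans h'.1, h'.2.trans h.2⟩

lemma lt_trans' {a b c : Tile} (h : Tile.lt a b) (h' : Tile.lt b c) : Tile.lt a c :=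
  ⟨le_trans' h.1 h'.1, fun hc => h.2 (le_trans' h'.1 hc)⟩

lemma ico_lt {k n : ℤ} : (2:ℝ)^k * n < (2:ℝ)^k * (n+1) := by
  have hp : (0:ℝ) < 2^k := by positivity
  have : ((n:ℝ)) < n + 1 := by linarith
  exact (mul_lt_mul_iff_right₀ hp).2 this

lemma spat_nonempty (s : Tile) : s.spat.Nonempty := Set.nonempty_Ico.2 ico_lt

lemma freq_nonempty (s : Tile) : s.freq.Nonempty := Set.nonempty_Ico.2 ico_lt

lemma dyadic_subset {k n k' n' : ℤ} (hk : k ≤ k') {x : ℝ}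
    (h1 : x ∈ Set.Ico ((2:ℝ)^k * n) ((2:ℝ)^k * (n+1)))
    (h2 : x ∈ Set.Ico ((2:ℝ)^k' * n') ((2:ℝ)^k' * (n'+1))) :
    Set.Ico ((2:ℝ)^k * n) ((2:ℝ)^k * (n+1)) ⊆ Set.Ico ((2:ℝ)^k' * n') ((2:ℝ)^k' * (n'+1)) := by
  obtain ⟨d, rfl⟩ : ∃ d : ℕ, k' = k + d := ⟨(k' - k).toNat, by omega⟩
  have hp : (0:ℝ) < 2^k := by positivity
  set m : ℤ := 2^d with hm
  have hsplit : (2:ℝ)^(k + (d:ℤ)) = 2^k * (m:ℝ) := by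
    rw [zpow_add₀ (by norm_num : (2:ℝ) ≠ 0)]
    congr 1
    push_cast [hm]
    rw [zpow_natCast]
  obtain ⟨ha1, ha2⟩ := h1
  obtain ⟨hb1, hb2⟩ := h2
  rw [hsplit] at hb1 hb2 ⊢
  have e1 : m * n' ≤ n := by
    have h' : (2:ℝ)^k * ((m:ℝ) * n') < 2^k * (n+1) := by
      rw [← mul_assoc]; exact lt_of_le_of_lt hb1 ha2
    have h'' : (m:ℝ) * (n':ℝ) < (n:ℝ) + 1 := (mul_lt_mul_iff_right₀ hp).1 h'
    have : m * n' < n + 1 := by exact_mod_cast h''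
    omega
  have e2 : n + 1 ≤ (n' + 1) * m := by
    have h' : (2:ℝ)^k * (n:ℝ) < 2^k * (((n':ℝ)+1) * m) := by
      have : (2:ℝ)^k * (m:ℝ) * (n'+1) = 2^k * (((n':ℝ)+1) * m) := by ring
      exact lt_of_le_of_lt ha1 (this ▸ hb2)
    have h'' : (n:ℝ) < ((n':ℝ)+1) * m := (mul_lt_mul_iff_right₀ hp).1 h'
    have : n < (n' + 1) * m := by exact_mod_cast h''
    omega
  apply Set.Ico_subset_Ico
  · have : ((m * n' : ℤ):ℝ) ≤ ((n:ℤ):ℝ) := by exact_mod_cast e1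
    push_cast at this
    nlinarith
  · have : ((n + 1 : ℤ):ℝ) ≤ (((n'+1) * m : ℤ):ℝ) := by exact_mod_cast e2
    push_cast at this
    nlinarith

lemma spat_subset {s s' : Tile} (h : s.kI ≤ s'.kI) (hx : (s.spat ∩ s'.spat).Nonempty) :
    s.spat ⊆ s'.spat := by
  obtain ⟨x, hx1, hx2⟩ := hx
  exact dyadic_subset h hx1 hx2

lemma freq_subset {s s' : Tile} (h : s.kω ≤ s'.kω) (hx : (s.freq ∩ s'.freq).Nonempty) :
    s.freq ⊆ s'.freq := by
  obtain ⟨x, hx1, hx2⟩ := hx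
  exact dyadic_subset h hx1 hx2

lemma comparable_same_area {A : ℤ} {s s' : Tile} (hs : s.kI + s.kω = A) (hs' : s'.kI + s'.kω = A)
    (hsp : (s.spat ∩ s'.spat).Nonempty) (hfr : (s.freq ∩ s'.freq).Nonempty) :
    Tile.le s s' ∨ Tile.le s' s := by
  rcases le_total s.kI s'.kI with h | h
  · exact Or.inl ⟨spat_subset h hsp, freq_subset (by omega) (Set.inter_comm _ _ ▸ hfr)⟩
  · exact Or.inr ⟨spat_subset h (Set.inter_comm _ _ ▸ hsp), freq_subset (by omega) hfr⟩

end TileAux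

namespace TileAux

lemma dyadic_inj {k n k' n' : ℤ}
    (h : Set.Ico ((2:ℝ)^k * n) ((2:ℝ)^k * (n+1)) = Set.Ico ((2:ℝ)^k' * n') ((2:ℝ)^k' * (n'+1))) :
    k = k' ∧ n = n' := by
  rw [Set.Ico_eq_Ico_iff (Or.inl ico_lt)] at h
  obtain ⟨h1, h2⟩ := h
  have hpow : (2:ℝ)^k = 2^k' := by nlinarith [h1, h2]
  have hk : k = k' := by
    have := zpow_right_injective₀ (by norm_num : (0:ℝ) < 2) (by norm_num : (2:ℝ) ≠ 1) hpow
    exact this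
  subst hk
  refine ⟨rfl, ?_⟩
  have hp : (0:ℝ) < 2^k := by positivity
  have : (n:ℝ) = (n':ℝ) := by
    have := mul_left_cancel₀ (ne_of_gt hp) (h1.trans (by rw [hpow]))
    exact_mod_cast this
  exact_mod_cast this

lemma eq_of_le_le {s t : Tile} (h : Tile.le s t) (h' : Tile.le t s) : s = t := by
  have hsp : s.spat = t.spat := Set.Subset.antisymm h.1 h'.1
  have hfr : s.freq = t.freq := Set.Subset.antisymm h'.2 h.2
  obtain ⟨h1, h2⟩ := dyadic_inj hsp
  obtain ⟨h3, h4⟩ := dyadic_inj hfr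
  cases s; cases t; simp_all

instance : PartialOrder Tile where
  le := Tile.le
  lt := Tile.lt
  le_refl := le_refl'
  le_trans := fun _ _ _ => le_trans'
  lt_iff_le_not_ge := fun _ _ => Iff.rfl
  le_antisymm := fun _ _ => eq_of_le_le

end TileAux


open TileAux

/-- decomposition by level sets of the counting function avoids
vees.  Let `S*` be a finite set of tiles and `S` a finite set of tiles (all of
the same fixed area `2^A`) with `C(s) := #{s* ∈ S* : s < s*}` satisfying
`1 ≤ C(s) ≤ 2^K` on `S`.  Then each level set
`U(k) = {s ∈ S : 2^{k-1} ≤ C(s) < 2^k}` (`1 ≤ k ≤ K`) contains no vee, and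
hence decomposes uniquely into maximal trees: each `s ∈ U(k)` lies below a
unique maximal element of `U(k)`. -/
theorem level_sets_vee_free (A : ℤ) (K : ℕ) (Sstar S : Set Tile)
    (hfin : Sstar.Finite) (hSfin : S.Finite)
    (hA : ∀ t ∈ S ∪ Sstar, t.kI + t.kω = A)
    (C : Tile → ℕ) (hC : ∀ s : Tile, C s = {t ∈ Sstar | Tile.lt s t}.ncard)
    (hbound : ∀ s ∈ S, 1 ≤ C s ∧ C s ≤ 2 ^ K) :
    ∀ k : ℕ, 1 ≤ k → k ≤ K →
      (¬ ∃ s ∈ {s ∈ S | 2 ^ (k-1) ≤ C s ∧ C s < 2 ^ k},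
          ∃ s' ∈ {s ∈ S | 2 ^ (k-1) ≤ C s ∧ C s < 2 ^ k},
          ∃ s'' ∈ {s ∈ S | 2 ^ (k-1) ≤ C s ∧ C s < 2 ^ k},
            Tile.lt s s' ∧ Tile.lt s s'' ∧ ¬ Tile.le s' s'' ∧ ¬ Tile.le s'' s') ∧
      (∀ s ∈ {s ∈ S | 2 ^ (k-1) ≤ C s ∧ C s < 2 ^ k},
        ∃! m : Tile, m ∈ {s ∈ S | 2 ^ (k-1) ≤ C s ∧ C s < 2 ^ k} ∧ Tile.le s m ∧
          ∀ t ∈ {s ∈ S | 2 ^ (k-1) ≤ C s ∧ C s < 2 ^ k}, Tile.le m t → m = t) := by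
  intro k hk1 hkK
  set U : Set Tile := {s ∈ S | 2 ^ (k-1) ≤ C s ∧ C s < 2 ^ k} with hU
  have noVee : ¬ ∃ s ∈ U, ∃ s' ∈ U, ∃ s'' ∈ U,
      Tile.lt s s' ∧ Tile.lt s s'' ∧ ¬ Tile.le s' s'' ∧ ¬ Tile.le s'' s' := by
    rintro ⟨s, hs, s', hs', s'', hs'', h1, h2, h3, h4⟩
    have hdisj : Disjoint {t ∈ Sstar | Tile.lt s' t} {t ∈ Sstar | Tile.lt s'' t} := by
      rw [Set.disjoint_left]
      rintro t ⟨htS, hts'⟩ ⟨_, hts''⟩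
      have hfr : (s'.freq ∩ s''.freq).Nonempty :=
        (freq_nonempty t).mono (Set.subset_inter hts'.1.2 hts''.1.2)
      have hsp : (s'.spat ∩ s''.spat).Nonempty :=
        (spat_nonempty s).mono (Set.subset_inter h1.1.1 h2.1.1)
      rcases comparable_same_area (hA s' (Or.inl hs'.1)) (hA s'' (Or.inl hs''.1)) hsp hfr with h | h
      exacts [h3 h, h4 h]
    have hsub' : {t ∈ Sstar | Tile.lt s' t} ⊆ {t ∈ Sstar | Tile.lt s t} := by
      rintro t ⟨ht, hlt⟩; exact ⟨ht, lt_trans' h1 hlt⟩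
    have hsub'' : {t ∈ Sstar | Tile.lt s'' t} ⊆ {t ∈ Sstar | Tile.lt s t} := by
      rintro t ⟨ht, hlt⟩; exact ⟨ht, lt_trans' h2 hlt⟩
    have hf1 : {t ∈ Sstar | Tile.lt s' t}.Finite := hfin.subset (Set.sep_subset _ _)
    have hf2 : {t ∈ Sstar | Tile.lt s'' t}.Finite := hfin.subset (Set.sep_subset _ _)
    have hf0 : {t ∈ Sstar | Tile.lt s t}.Finite := hfin.subset (Set.sep_subset _ _)
    have hcard : C s' + C s'' ≤ C s := by
      rw [hC s, hC s', hC s'']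
      rw [← Set.ncard_union_eq hdisj hf1 hf2]
      exact Set.ncard_le_ncard (Set.union_subset hsub' hsub'') hf0
    obtain ⟨k', rfl⟩ : ∃ k', k = k' + 1 := ⟨k - 1, by omega⟩
    have hpow : 2 ^ (k' + 1) = 2 ^ k' + 2 ^ k' := by rw [pow_succ]; ring
    have := hs'.2.1
    have := hs''.2.1
    have := hs.2.2
    simp only [Nat.add_sub_cancel] at *
    omega
  refine ⟨noVee, ?_⟩
  intro s hs
  have hUfin : U.Finite := hSfin.subset (Set.sep_subset _ _)
  have hTfin : {t ∈ U | Tile.le s t}.Finite := hUfin.subset (Set.sep_subset _ _)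
  obtain ⟨m, hm, hmax⟩ := hTfin.exists_maximalFor id _ ⟨s, hs, le_refl' s⟩
  have hmU : m ∈ U := hm.1
  have hsm : Tile.le s m := hm.2
  have hmaxU : ∀ t ∈ U, Tile.le m t → m = t := by
    intro t ht hmt
    exact eq_of_le_le hmt (hmax ⟨ht, le_trans' hsm hmt⟩ hmt)
  refine ⟨m, ⟨hmU, hsm, hmaxU⟩, ?_⟩
  rintro m' ⟨hm'U, hsm', hmax'⟩
  by_contra hne
  have hnm' : ¬ Tile.le m' m := fun h => hne (hmax' m hmU h)
  have hnm : ¬ Tile.le m m' := fun h => hne ((hmaxU m' hm'U h).symm)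
  have hlt1 : Tile.lt s m' := ⟨hsm', fun h => hnm' (le_trans' h hsm)⟩
  have hlt2 : Tile.lt s m := ⟨hsm, fun h => hnm (le_trans' h hsm')⟩
  exact noVee ⟨s, hs, m', hm'U, m, hmU, hlt1, hlt2, hnm', hnm⟩
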